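/- Let q = (q_0, ..., q_5) ∈ ℤ^6 satisfy the Bazaikin freeness condition. Then the number of indices i ∈ {0,...,5} with q_i ≡ 1 (mod 4) is either 1 or 5; equivalently, up to reordering and an overall sign change, q ≡ (1,1,1,1,1,−1) (mod 4). -/

import Mathlib

/-- The `k`-th elementary symmetric polynomial of the tuple `q`. -/
def esymm {n : ℕ} (k : ℕ) (q : Fin n → ℤ) : ℤ :=
  ∑ t ∈ Finset.univ.powersetCard k, ∏ i ∈ t, q i

/-- The Bazaikin freeness condition: the entries sum to zero, all entries are odd,
and `gcd (q a + q b, q c + q d) = 2` for all pairwise distinct indices `a b c d`. -/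
def BazaikinFree (q : Fin 6 → ℤ) : Prop :=
  (∑ i, q i) = 0 ∧ (∀ i, Odd (q i)) ∧
    ∀ a b c d : Fin 6, a ≠ b → a ≠ c → a ≠ d → b ≠ c → b ≠ d → c ≠ d →
      Int.gcd (q a + q b) (q c + q d) = 2

/-- The positive curvature condition: there is an index `i₀` such that
`q i + q j > 0` for all pairs `i < j` avoiding `i₀`, or `q i + q j < 0` for all such pairs. -/
def PosCurv (q : Fin 6 → ℤ) : Prop :=
  ∃ i₀ : Fin 6,
    (∀ i j : Fin 6, i < j → i ≠ i₀ → j ≠ i₀ → 0 < q i + q j) ∨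
    (∀ i j : Fin 6, i < j → i ≠ i₀ → j ≠ i₀ → q i + q j < 0)

theorem residues_mod_four (q : Fin 6 → ℤ) (h : BazaikinFree q) :
    (Finset.univ.filter (fun i : Fin 6 => q i % 4 = 1)).card = 1 ∨
    (Finset.univ.filter (fun i : Fin 6 => q i % 4 = 1)).card = 5 := by
  obtain ⟨hsum, hodd, hgcd⟩ := h
  have hmod : ∀ i, q i % 4 = 1 ∨ q i % 4 = 3 := fun i => by
    have := (Int.odd_iff).1 (hodd i); omega
  have key : ∀ a b c d : Fin 6, a ≠ b → a ≠ c → a ≠ d → b ≠ c → b ≠ d → c ≠ d →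
      (q a + q b) % 4 ≠ 0 ∨ (q c + q d) % 4 ≠ 0 := by
    intro a b c d hab hac had hbc hbd hcd
    by_contra hcon
    push_neg at hcon
    have h4 : (4:ℤ) ∣ (Int.gcd (q a + q b) (q c + q d) : ℤ) :=
      Int.dvd_coe_gcd (by omega) (by omega)
    rw [hgcd a b c d hab hac had hbc hbd hcd] at h4
    norm_num at h4
  have hsum' : q 0 + q 1 + q 2 + q 3 + q 4 + q 5 = 0 := by
    rw [Fin.sum_univ_six] at hsum; linarith
  have hcard : (Finset.univ.filter (fun i : Fin 6 => q i % 4 = 1)).card =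
      ((if q 0 % 4 = 1 then 1 else 0) + (if q 1 % 4 = 1 then 1 else 0)
      + (if q 2 % 4 = 1 then 1 else 0) + (if q 3 % 4 = 1 then 1 else 0)
      + (if q 4 % 4 = 1 then 1 else 0) + (if q 5 % 4 = 1 then 1 else 0) : ℕ) := by
    rw [Finset.card_filter, Fin.sum_univ_six]
  have k0 := key 0 1 2 3 (by decide) (by decide) (by decide) (by decide) (by decide) (by decide)
  have k1 := key 0 1 2 4 (by decide) (by decide) (by decide) (by decide) (by decide) (by decide)
  have k2 := key 0 1 3 2 (by decide) (by decide) (by decide) (by decide) (by decide) (by decide)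
  have k3 := key 0 1 4 2 (by decide) (by decide) (by decide) (by decide) (by decide) (by decide)
  have k4 := key 0 2 1 3 (by decide) (by decide) (by decide) (by decide) (by decide) (by decide)
  have k5 := key 0 2 1 4 (by decide) (by decide) (by decide) (by decide) (by decide) (by decide)
  have k6 := key 0 3 1 4 (by decide) (by decide) (by decide) (by decide) (by decide) (by decide)
  have k7 := key 1 0 2 3 (by decide) (by decide) (by decide) (by decide) (by decide) (by decide)
  have k8 := key 1 0 2 4 (by decide) (by decide) (by decide) (by decide) (by decide) (by decide)
  have k9 := key 1 0 3 2 (by decide) (by decide) (by decide) (by decide) (by decide) (by decide)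
  have k10 := key 1 0 4 2 (by decide) (by decide) (by decide) (by decide) (by decide) (by decide)
  have k11 := key 2 0 3 1 (by decide) (by decide) (by decide) (by decide) (by decide) (by decide)
  have k12 := key 2 0 4 1 (by decide) (by decide) (by decide) (by decide) (by decide) (by decide)
  have k13 := key 3 0 4 1 (by decide) (by decide) (by decide) (by decide) (by decide) (by decide)
  have d0 : (q 0 % 4 = 1 ∧ (if q 0 % 4 = 1 then (1:ℕ) else 0) = 1) ∨
      (q 0 % 4 = 3 ∧ (if q 0 % 4 = 1 then (1:ℕ) else 0) = 0) := by
    rcases hmod 0 with h|h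
    · exact Or.inl ⟨h, if_pos h⟩
    · exact Or.inr ⟨h, if_neg (by omega)⟩
  have d1 : (q 1 % 4 = 1 ∧ (if q 1 % 4 = 1 then (1:ℕ) else 0) = 1) ∨
      (q 1 % 4 = 3 ∧ (if q 1 % 4 = 1 then (1:ℕ) else 0) = 0) := by
    rcases hmod 1 with h|h
    · exact Or.inl ⟨h, if_pos h⟩
    · exact Or.inr ⟨h, if_neg (by omega)⟩
  have d2 : (q 2 % 4 = 1 ∧ (if q 2 % 4 = 1 then (1:ℕ) else 0) = 1) ∨
      (q 2 % 4 = 3 ∧ (if q 2 % 4 = 1 then (1:ℕ) else 0) = 0) := by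
    rcases hmod 2 with h|h
    · exact Or.inl ⟨h, if_pos h⟩
    · exact Or.inr ⟨h, if_neg (by omega)⟩
  have d3 : (q 3 % 4 = 1 ∧ (if q 3 % 4 = 1 then (1:ℕ) else 0) = 1) ∨
      (q 3 % 4 = 3 ∧ (if q 3 % 4 = 1 then (1:ℕ) else 0) = 0) := by
    rcases hmod 3 with h|h
    · exact Or.inl ⟨h, if_pos h⟩
    · exact Or.inr ⟨h, if_neg (by omega)⟩
  have d4 : (q 4 % 4 = 1 ∧ (if q 4 % 4 = 1 then (1:ℕ) else 0) = 1) ∨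
      (q 4 % 4 = 3 ∧ (if q 4 % 4 = 1 then (1:ℕ) else 0) = 0) := by
    rcases hmod 4 with h|h
    · exact Or.inl ⟨h, if_pos h⟩
    · exact Or.inr ⟨h, if_neg (by omega)⟩
  have d5 : (q 5 % 4 = 1 ∧ (if q 5 % 4 = 1 then (1:ℕ) else 0) = 1) ∨
      (q 5 % 4 = 3 ∧ (if q 5 % 4 = 1 then (1:ℕ) else 0) = 0) := by
    rcases hmod 5 with h|h
    · exact Or.inl ⟨h, if_pos h⟩
    · exact Or.inr ⟨h, if_neg (by omega)⟩
  omega
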